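/- Let S₃ be the 2×2 block symmetric matrix [[T + R, R],[R, R + C]] where T is SPD, R is symmetric positive semi-definite, and C is symmetric positive semi-definite with R + C SPD. Let Ŝ₃ = diag(T + R, G) with G SPD. If λ ≠ 1 is an eigenvalue of Ŝ₃⁻¹S₃ with eigenvector (p, q), then q ≠ 0 and λ satisfies λ² − (1+b)λ + (b−a) = 0, where a = qᵀ R (T+R)⁻¹ R q / (qᵀGq) and b = qᵀ(R+C)q / (qᵀGq). -/

import Mathlib

open Matrix

theorem three_field_eigenvalue_quadratic {N : ℕ}
    (T G R C : Matrix (Fin N) (Fin N) ℝ) (lam : ℝ)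
    (p q : Fin N → ℝ)
    (hT : T.PosDef) (hG : G.PosDef) (hR : R.PosSemidef) (hC : C.PosSemidef)
    (hRC : (R + C).PosDef)
    (hlam : lam ≠ 1)
    (hvec : ¬(p = 0 ∧ q = 0))
    (heq1 : (T + R).mulVec p + R.mulVec q = lam • (T + R).mulVec p)
    (heq2 : R.mulVec p + (R + C).mulVec q = lam • G.mulVec q) :
    q ≠ 0 ∧
    lam ^ 2
      - (1 + (q ⬝ᵥ (R + C).mulVec q) / (q ⬝ᵥ G.mulVec q)) * lam
      + ((q ⬝ᵥ (R + C).mulVec q) / (q ⬝ᵥ G.mulVec q)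
          - (q ⬝ᵥ (R * (T + R)⁻¹ * R).mulVec q) / (q ⬝ᵥ G.mulVec q)) = 0 := by
  have hTR : (T + R).PosDef := hT.add_posSemidef hR
  have hdet : IsUnit (T + R).det := hTR.det_pos.ne'.isUnit
  have hq : q ≠ 0 := by
    intro h
    subst h
    simp only [Matrix.mulVec_zero, add_zero] at heq1
    have h1 : (lam - 1) • (T + R).mulVec p = 0 := by
      rw [sub_smul, one_smul, ← heq1]; abel
    have h2 : (T + R).mulVec p = 0 := by
      rcases smul_eq_zero.mp h1 with h | h
      · exact absurd (sub_eq_zero.mp h) hlam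
      · exact h
    have hp : p = 0 := by
      have := congrArg (fun v => (T + R)⁻¹.mulVec v) h2
      simpa [Matrix.mulVec_mulVec, Matrix.nonsing_inv_mul _ hdet] using this
    exact hvec ⟨hp, rfl⟩
  refine ⟨hq, ?_⟩
  have hg : 0 < q ⬝ᵥ G.mulVec q := by
    have := hG.dotProduct_mulVec_pos hq
    simpa using this
  have hRq : R.mulVec q = (lam - 1) • (T + R).mulVec p := by
    rw [sub_smul, one_smul, ← heq1]; abel
  have hinner : (T + R)⁻¹.mulVec (R.mulVec q) = (lam - 1) • p := by
    rw [hRq, Matrix.mulVec_smul, Matrix.mulVec_mulVec,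
      Matrix.nonsing_inv_mul _ hdet, Matrix.one_mulVec]
  have ha : q ⬝ᵥ (R * (T + R)⁻¹ * R).mulVec q = (lam - 1) * (q ⬝ᵥ R.mulVec p) := by
    rw [← Matrix.mulVec_mulVec, ← Matrix.mulVec_mulVec, hinner, Matrix.mulVec_smul,
      dotProduct_smul, smul_eq_mul]
  have h2 : q ⬝ᵥ R.mulVec p + q ⬝ᵥ (R + C).mulVec q = lam * (q ⬝ᵥ G.mulVec q) := by
    have := congrArg (fun v => q ⬝ᵥ v) heq2
    simpa [dotProduct_add, dotProduct_smul] using this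
  set g := q ⬝ᵥ G.mulVec q
  set b := q ⬝ᵥ (R + C).mulVec q
  set a := q ⬝ᵥ (R * (T + R)⁻¹ * R).mulVec q
  have key : lam ^ 2 * g - (g + b) * lam + (b - a) = 0 := by
    linear_combination (1 - lam) * h2 - ha
  have hg' : g ≠ 0 := ne_of_gt hg
  field_simp
  linear_combination key
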